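/- Let T > 0 and α : [0,T) → ℝ continuous with limit α(T) := lim_{t↑T} α(t) existing. If δ₁ ≤ α(t) ≤ δ₂ for all t ∈ [t₀,T) with 1/2 < δ₁ ≤ δ₂, then ∫₀ᵗ exp(2∫₀ˢ α(u)/(T-u) du) ds → ∞ as t ↑ T. -/

import Mathlib

open Real Filter intervalIntegral

theorem stmt_2 (T : ℝ) (hT : 0 < T) (α : ℝ → ℝ)
    (hα : ContinuousOn α (Set.Ico 0 T))
    (αT : ℝ) (hlim : Tendsto α (nhdsWithin T (Set.Iio T)) (nhds αT))
    (t₀ δ₁ δ₂ : ℝ) (ht₀ : t₀ ∈ Set.Ioo (0:ℝ) T)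
    (hδ₁ : 1/2 < δ₁) (hδ₁₂ : δ₁ ≤ δ₂)
    (hbound : ∀ t ∈ Set.Ico t₀ T, δ₁ ≤ α t ∧ α t ≤ δ₂) :
    Tendsto (fun t => ∫ s in (0:ℝ)..t, Real.exp (2 * ∫ u in (0:ℝ)..s, α u / (T - u)))
      (nhdsWithin T (Set.Iio T)) atTop := by
  obtain ⟨ht₀0, ht₀T⟩ := ht₀
  have hsub : ∀ a b : ℝ, 0 ≤ a → 0 ≤ b → a < T → b < T → Set.uIcc a b ⊆ Set.Ico 0 T :=
    fun a b ha hb haT hbT => Set.ordConnected_Ico.uIcc_subset ⟨ha, haT⟩ ⟨hb, hbT⟩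
  have hf_cont : ContinuousOn (fun u => α u / (T - u)) (Set.Ico 0 T) := by
    apply hα.div ((continuous_const.sub continuous_id).continuousOn)
    intro u hu
    exact sub_ne_zero.mpr (ne_of_gt hu.2)
  have hf_int : ∀ a b : ℝ, 0 ≤ a → 0 ≤ b → a < T → b < T →
      IntervalIntegrable (fun u => α u / (T - u)) MeasureTheory.volume a b :=
    fun a b ha hb haT hbT => (hf_cont.mono (hsub a b ha hb haT hbT)).intervalIntegrable
  set I : ℝ → ℝ := fun s => ∫ u in (0:ℝ)..s, α u / (T - u) with hI_def
  set c : ℝ := Real.exp (2 * I t₀) * (T - t₀) ^ (2*δ₁) with hc_def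
  have hTt₀ : 0 < T - t₀ := by linarith
  have hc_pos : 0 < c := mul_pos (exp_pos _) (rpow_pos_of_pos hTt₀ _)
  -- pointwise lower bound
  have key : ∀ s ∈ Set.Ico t₀ T, c * (T - s) ^ (-(2*δ₁)) ≤ Real.exp (2 * I s) := by
    rintro s ⟨hs1, hs2⟩
    have hTs : 0 < T - s := by linarith
    have hIs : I s = I t₀ + ∫ u in t₀..s, α u / (T - u) := by
      rw [hI_def]
      exact (integral_add_adjacent_intervals (hf_int 0 t₀ le_rfl ht₀0.le hT ht₀T)
        (hf_int t₀ s ht₀0.le (by linarith) ht₀T hs2)).symm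
    have hmono : δ₁ * (Real.log (T - t₀) - Real.log (T - s)) ≤ ∫ u in t₀..s, α u / (T - u) := by
      have hcont2 : ContinuousOn (fun u : ℝ => δ₁ * (T - u)⁻¹) (Set.uIcc t₀ s) := by
        apply continuousOn_const.mul
        apply ((continuous_const.sub continuous_id).continuousOn).inv₀
        intro u hu
        rw [Set.uIcc_of_le hs1] at hu
        have : u ≤ s := hu.2
        show T - u ≠ 0
        exact sub_ne_zero.mpr (by linarith)
      have h1 : (∫ u in t₀..s, δ₁ * (T - u)⁻¹) ≤ ∫ u in t₀..s, α u / (T - u) := by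
        apply integral_mono_on hs1 hcont2.intervalIntegrable
          (hf_int t₀ s ht₀0.le (by linarith) ht₀T hs2)
        intro u hu
        have hTu : 0 < T - u := by linarith [hu.2]
        have hb := (hbound u ⟨hu.1, by linarith [hu.2]⟩).1
        rw [div_eq_mul_inv]
        exact mul_le_mul_of_nonneg_right hb (inv_nonneg.mpr hTu.le)
      have h2 : (∫ u in t₀..s, δ₁ * (T - u)⁻¹) = δ₁ * (Real.log (T - t₀) - Real.log (T - s)) := by
        rw [integral_const_mul]
        have h3 : (∫ u in t₀..s, (T - u)⁻¹) = ∫ x in (T - s)..(T - t₀), x⁻¹ :=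
          integral_comp_sub_left (fun x => x⁻¹) T
        have h0 : (0:ℝ) ∉ Set.uIcc (T - s) (T - t₀) := by
          rw [Set.uIcc_of_le (by linarith)]
          rintro ⟨h0a, _⟩
          linarith
        rw [h3, integral_inv h0, Real.log_div (ne_of_gt hTt₀) (ne_of_gt hTs)]
      linarith
    have hrw : c * (T - s) ^ (-(2*δ₁)) =
        Real.exp (2 * I t₀ + 2*δ₁ * (Real.log (T - t₀) - Real.log (T - s))) := by
      rw [hc_def, rpow_def_of_pos hTt₀, rpow_def_of_pos hTs]
      rw [← Real.exp_add, ← Real.exp_add]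
      ring_nf
    rw [hrw, Real.exp_le_exp, hIs]
    nlinarith
  -- continuity of I and integrability of exp(2 * I)
  have hE_int : ∀ a b : ℝ, 0 ≤ a → 0 ≤ b → a < T → b < T →
      IntervalIntegrable (fun s => Real.exp (2 * I s)) MeasureTheory.volume a b := by
    intro a b ha hb haT hbT
    set m := max a b with hm
    have hm0 : 0 ≤ m := le_trans ha (le_max_left _ _)
    have hmT : m < T := max_lt haT hbT
    have hIc : ContinuousOn I (Set.uIcc 0 m) := by
      apply continuousOn_primitive_interval
      exact ((hf_cont.mono (hsub 0 m le_rfl hm0 hT hmT)).integrableOn_Icc).mono_set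
        (fun x hx => hx)
    have hsub2 : Set.uIcc a b ⊆ Set.uIcc 0 m := by
      rw [Set.uIcc_of_le hm0]
      intro x hx
      rcases Set.mem_uIcc.mp hx with ⟨h1, h2⟩ | ⟨h1, h2⟩
      · exact ⟨le_trans ha h1, le_trans h2 (le_max_right _ _)⟩
      · exact ⟨le_trans hb h1, le_trans h2 (le_max_left _ _)⟩
    exact ((Real.continuous_exp.comp_continuousOn
      ((continuousOn_const.mul (hIc.mono hsub2)))).intervalIntegrable)
  -- lower bound for the full integral, for t ∈ Ioo t₀ T
  set G : ℝ → ℝ := fun t => c / (2*δ₁ - 1) * (T - t) ^ (1 - 2*δ₁)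
      - c / (2*δ₁ - 1) * (T - t₀) ^ (1 - 2*δ₁) with hG_def
  have hFG : ∀ t ∈ Set.Ioo t₀ T, G t ≤ ∫ s in (0:ℝ)..t, Real.exp (2 * I s) := by
    rintro t ⟨ht1, ht2⟩
    have hTt : 0 < T - t := by linarith
    have hsplit : (∫ s in (0:ℝ)..t, Real.exp (2 * I s)) =
        (∫ s in (0:ℝ)..t₀, Real.exp (2 * I s)) + ∫ s in t₀..t, Real.exp (2 * I s) :=
      (integral_add_adjacent_intervals (hE_int 0 t₀ le_rfl ht₀0.le hT ht₀T)
        (hE_int t₀ t ht₀0.le (by linarith) ht₀T ht2)).symm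
    have hA : 0 ≤ ∫ s in (0:ℝ)..t₀, Real.exp (2 * I s) :=
      integral_nonneg ht₀0.le (fun s _ => (exp_pos _).le)
    have hlow_int : IntervalIntegrable (fun s => c * (T - s) ^ (-(2*δ₁)))
        MeasureTheory.volume t₀ t := by
      apply ContinuousOn.intervalIntegrable
      apply continuousOn_const.mul
      apply ContinuousOn.rpow_const ((continuous_const.sub continuous_id).continuousOn)
      intro s hs
      rw [Set.uIcc_of_le ht1.le] at hs
      show T - s ≠ 0 ∨ _
      exact Or.inl (sub_ne_zero.mpr (by linarith [hs.2]))
    have hB : (∫ s in t₀..t, c * (T - s) ^ (-(2*δ₁))) ≤ ∫ s in t₀..t, Real.exp (2 * I s) := by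
      apply integral_mono_on ht1.le hlow_int (hE_int t₀ t ht₀0.le (by linarith) ht₀T ht2)
      intro s hs
      exact key s ⟨hs.1, by linarith [hs.2]⟩
    have hcomp : (∫ s in t₀..t, c * (T - s) ^ (-(2*δ₁))) = G t := by
      rw [integral_const_mul]
      have h3 : (∫ s in t₀..t, (T - s) ^ (-(2*δ₁))) =
          ∫ x in (T - t)..(T - t₀), x ^ (-(2*δ₁)) :=
        integral_comp_sub_left (fun x => x ^ (-(2*δ₁))) T
      have h0 : (0:ℝ) ∉ Set.uIcc (T - t) (T - t₀) := by
        rw [Set.uIcc_of_le (by linarith)]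
        rintro ⟨h0a, _⟩
        linarith
      rw [h3, integral_rpow (Or.inr ⟨by linarith, h0⟩), hG_def]
      have he : -(2*δ₁) + 1 = 1 - 2*δ₁ := by ring
      rw [he]
      have hne : (1:ℝ) - 2*δ₁ ≠ 0 := by intro h; linarith [h]
      have hne' : 2*δ₁ - (1:ℝ) ≠ 0 := by intro h; linarith [h]
      field_simp
      ring
    rw [hsplit, ← hcomp]
    linarith
  -- G tends to atTop
  have hG_tendsto : Tendsto G (nhdsWithin T (Set.Iio T)) atTop := by
    have h1 : Tendsto (fun t => T - t) (nhdsWithin T (Set.Iio T)) (nhdsWithin 0 (Set.Ioi 0)) := by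
      rw [tendsto_nhdsWithin_iff]
      constructor
      · have h : Tendsto (fun t : ℝ => T - t) (nhdsWithin T (Set.Iio T)) (nhds (T - T)) :=
          (((continuous_const.sub continuous_id).tendsto T).mono_left nhdsWithin_le_nhds :)
        simpa using h
      · filter_upwards [self_mem_nhdsWithin] with t ht
        exact Set.mem_Ioi.mpr (by simp only [Set.mem_Iio] at ht; linarith)
    have h2 : Tendsto (fun t => ((T - t)⁻¹ : ℝ)) (nhdsWithin T (Set.Iio T)) atTop :=
      tendsto_inv_nhdsGT_zero.comp h1
    have h3 : Tendsto (fun t => ((T - t)⁻¹ : ℝ) ^ (2*δ₁ - 1)) (nhdsWithin T (Set.Iio T)) atTop :=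
      (tendsto_rpow_atTop (by linarith)).comp h2
    have h4 : Tendsto (fun t => ((T - t) : ℝ) ^ (1 - 2*δ₁)) (nhdsWithin T (Set.Iio T)) atTop := by
      apply h3.congr'
      filter_upwards [self_mem_nhdsWithin] with t ht
      simp only [Set.mem_Iio] at ht
      have hTt : (0:ℝ) ≤ T - t := by linarith
      rw [Real.inv_rpow hTt, ← Real.rpow_neg hTt]
      congr 1
      ring
    have hpos : (0:ℝ) < c / (2*δ₁ - 1) := div_pos hc_pos (by linarith)
    have h5 := Filter.Tendsto.const_mul_atTop hpos h4
    exact tendsto_atTop_add_const_right _ _ h5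
  refine tendsto_atTop_mono' _ ?_ hG_tendsto
  filter_upwards [Ioo_mem_nhdsLT_of_mem ⟨ht₀T, le_refl T⟩] with t ht
  exact hFG t ht
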